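/- Let Q be a symmetric positive semidefinite n×n real matrix with Q ≠ 0, u ∈ ℝⁿ, f(x) = (1/2)xᵀQx − uᵀx, and x̄ ∈ ℝⁿ with ‖Qx̄ − u‖ = δ₀ > 0. Let λ_M be the minimal positive eigenvalue of Q. Then there exists ε > 0 (e.g. ε = min(δ₀/‖Q‖, (δ₀/‖Q‖)(√(‖Q‖/(2λ_M) + 1) − 1))) such that for all x with ‖x − x̄‖ ≤ ε, |f(x) − f(x̄)| ≤ (1/(2λ_M)) ‖Qx − u‖². -/

import Mathlib

open scoped RealInnerProductSpace

set_option maxHeartbeats 1000000 in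
theorem stmt_1 {n : ℕ}
    (Q : EuclideanSpace ℝ (Fin n) →L[ℝ] EuclideanSpace ℝ (Fin n))
    (hsym : IsSelfAdjoint Q)
    (hpsd : ∀ x, 0 ≤ ⟪Q x, x⟫)
    (hQ0 : Q ≠ 0)
    (u : EuclideanSpace ℝ (Fin n))
    (f : EuclideanSpace ℝ (Fin n) → ℝ)
    (hf : ∀ x, f x = (1/2) * ⟪Q x, x⟫ - ⟪u, x⟫)
    (xbar : EuclideanSpace ℝ (Fin n)) (δ₀ : ℝ)
    (hδ₀ : ‖Q xbar - u‖ = δ₀) (hδ₀pos : 0 < δ₀)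
    (lamM : ℝ) (hlam_pos : 0 < lamM)
    (hlam_eig : Module.End.HasEigenvalue
      (Q : EuclideanSpace ℝ (Fin n) →ₗ[ℝ] EuclideanSpace ℝ (Fin n)) lamM)
    (hlam_min : ∀ μ : ℝ, 0 < μ →
      Module.End.HasEigenvalue
        (Q : EuclideanSpace ℝ (Fin n) →ₗ[ℝ] EuclideanSpace ℝ (Fin n)) μ → lamM ≤ μ) :
    ∃ ε > 0, ∀ x, ‖x - xbar‖ ≤ ε →
      |f x - f xbar| ≤ (1 / (2 * lamM)) * ‖Q x - u‖ ^ 2 := by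
  have hsym' : ∀ a b, ⟪Q a, b⟫ = ⟪a, Q b⟫ :=
    (ContinuousLinearMap.isSelfAdjoint_iff_isSymmetric.mp hsym)
  set C := ‖Q‖ with hC
  have hCpos : 0 < C := norm_pos_iff.mpr hQ0
  set ε := min 1 (min (δ₀ / (2 * C)) (δ₀ ^ 2 / (8 * lamM * (δ₀ + C)))) with hεdef
  have hεpos : 0 < ε := by
    apply lt_min one_pos
    apply lt_min <;> positivity
  have hε1 : ε ≤ 1 := min_le_left _ _
  have hε2 : ε ≤ δ₀ / (2 * C) := le_trans (min_le_right _ _) (min_le_left _ _)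
  have hε3 : ε ≤ δ₀ ^ 2 / (8 * lamM * (δ₀ + C)) :=
    le_trans (min_le_right _ _) (min_le_right _ _)
  refine ⟨ε, hεpos, fun x hx => ?_⟩
  set h := x - xbar with hh
  have hnh : ‖h‖ ≤ ε := hx
  have hnh0 : 0 ≤ ‖h‖ := norm_nonneg _
  have hxeq : x = xbar + h := by simp [hh]
  -- key algebraic identity
  have key : f x - f xbar = ⟪Q xbar - u, h⟫ + (1/2) * ⟪Q h, h⟫ := by
    rw [hf, hf, hxeq]
    have hs : ⟪Q h, xbar⟫ = ⟪Q xbar, h⟫ := by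
      rw [hsym', real_inner_comm]
    simp only [map_add, inner_add_left, inner_add_right, inner_sub_left]
    rw [hs]; ring
  -- upper bound on |f x - f xbar|
  have hb1 : |⟪Q xbar - u, h⟫| ≤ δ₀ * ‖h‖ := by
    have := abs_real_inner_le_norm (Q xbar - u) h
    rwa [hδ₀] at this
  have hQh : ‖Q h‖ ≤ C * ‖h‖ := Q.le_opNorm h
  have hb2 : |⟪Q h, h⟫| ≤ C * ‖h‖ ^ 2 := by
    have h1 := abs_real_inner_le_norm (Q h) h
    nlinarith [norm_nonneg (Q h)]
  have hub : |f x - f xbar| ≤ δ₀ ^ 2 / (8 * lamM) := by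
    rw [key]
    have habs : |⟪Q xbar - u, h⟫ + (1/2) * ⟪Q h, h⟫| ≤ δ₀ * ‖h‖ + (1/2) * (C * ‖h‖ ^ 2) := by
      refine le_trans (abs_add_le _ _) (add_le_add hb1 ?_)
      rw [abs_mul, abs_of_pos (by norm_num : (0:ℝ) < 1/2)]
      nlinarith
    have hsq : ‖h‖ ^ 2 ≤ ε := by nlinarith
    have hle : δ₀ * ‖h‖ + (1/2) * (C * ‖h‖ ^ 2) ≤ (δ₀ + C) * ε := by nlinarith
    have hε3' : (δ₀ + C) * ε ≤ δ₀ ^ 2 / (8 * lamM) := by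
      have h0 : (0:ℝ) < δ₀ + C := by positivity
      calc (δ₀ + C) * ε ≤ (δ₀ + C) * (δ₀ ^ 2 / (8 * lamM * (δ₀ + C))) :=
            mul_le_mul_of_nonneg_left hε3 h0.le
        _ = δ₀ ^ 2 / (8 * lamM) := by field_simp
    linarith
  -- lower bound on ‖Q x - u‖
  have hlow : δ₀ / 2 ≤ ‖Q x - u‖ := by
    have h1 : ‖Q xbar - u‖ ≤ ‖Q xbar - Q x‖ + ‖Q x - u‖ :=
      norm_sub_le_norm_sub_add_norm_sub _ _ _
    have h2 : ‖Q xbar - Q x‖ ≤ C * ‖h‖ := by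
      have he : Q xbar - Q x = Q (xbar - x) := (map_sub Q xbar x).symm
      rw [he]
      calc ‖Q (xbar - x)‖ ≤ C * ‖xbar - x‖ := Q.le_opNorm _
        _ = C * ‖h‖ := by rw [norm_sub_rev, hh]
    have h4 : C * ‖h‖ ≤ δ₀ / 2 := by
      have hce : C * ε ≤ δ₀ / 2 := by
        have := mul_le_mul_of_nonneg_left hε2 hCpos.le
        calc C * ε ≤ C * (δ₀ / (2 * C)) := this
          _ = δ₀ / 2 := by field_simp
      calc C * ‖h‖ ≤ C * ε := mul_le_mul_of_nonneg_left hnh hCpos.le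
        _ ≤ δ₀ / 2 := hce
    rw [hδ₀] at h1
    linarith
  -- conclude
  have hsq2 : (δ₀ / 2) ^ 2 ≤ ‖Q x - u‖ ^ 2 := by
    have h0 : (0:ℝ) ≤ δ₀ / 2 := by positivity
    exact pow_le_pow_left₀ h0 hlow 2
  have hrhs : δ₀ ^ 2 / (8 * lamM) ≤ (1 / (2 * lamM)) * ‖Q x - u‖ ^ 2 := by
    have h1 : (1 / (2 * lamM)) * (δ₀ / 2) ^ 2 ≤ (1 / (2 * lamM)) * ‖Q x - u‖ ^ 2 :=
      mul_le_mul_of_nonneg_left hsq2 (by positivity)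
    have h2 : (1 / (2 * lamM)) * (δ₀ / 2) ^ 2 = δ₀ ^ 2 / (8 * lamM) := by
      field_simp; ring
    linarith
  linarith
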